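/- Let V ⊂ ℙⁿ be a hypersurface of degree d, f a squarefree defining polynomial, and g ∈ K[x₀,…,xₙ] homogeneous of degree e ≥ 1. Set R_{V,g}(x) = Res^y_{(1,…,n,e)}(f_1(x,y),…,f_n(x,y),g(y)), the resultant with respect to y of the polynomials f_1,…,f_n (of y-degrees 1,…,n) together with g(y). Then for p ∈ V with g(p) ≠ 0, R_{V,g}(p) = 0 if and only if p is a flex point of V. -/

import Mathlib

/-!
STATEMENT 9: Let `V = Z(f) ⊂ ℙⁿ` (`f` squarefree homogeneous of degree `d`), and let
`g` be homogeneous of degree `e ≥ 1`.  Set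
`R_{V,g}(x) = Res^y_{(1,…,n,e)}(f_1(x,y),…,f_n(x,y),g(y))`.  Then for `p ∈ V` with
`g(p) ≠ 0`: `R_{V,g}(p) = 0` iff `p` is a flex point of `V`.

We take the multivariate resultant of `n+1` homogeneous polynomials in `y₀,…,yₙ` of
degrees `1,…,n,e` abstractly, as a function `Res` on systems over `K` satisfying its
characteristic vanishing property (`Res = 0` iff the system has a nontrivial common
zero; `K` is algebraically closed).  `R_{V,g}(p)` is then `Res` applied to the system
`f_1(p,·),…,f_n(p,·),g(·)`, where `f_j(p,y)` is the `j`-th directional Taylor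
coefficient of `f` specialized at `x = p`.  A flex point admits a line with order of
contact `≥ n+1` (contact order measured by the `t`-adic valuation of `f(p+tq)`).
-/

open MvPolynomial Polynomial
open scoped Classical

/-- The restriction of `f` to the line `t ↦ p + t q`. -/
noncomputable def linePoly {K : Type} [CommRing K] {n : ℕ}
    (f : MvPolynomial (Fin (n + 1)) K) (p q : Fin (n + 1) → K) : Polynomial K :=
  MvPolynomial.aeval (fun i => Polynomial.C (p i) + Polynomial.X * Polynomial.C (q i)) f

/-- Order of contact at `p` of the line through `p` and `q` with `Z(f)`. -/
noncomputable def contactOrder {K : Type} [Field K] {n : ℕ}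
    (f : MvPolynomial (Fin (n + 1)) K) (p q : Fin (n + 1) → K) : ℕ∞ :=
  if linePoly f p q = 0 then ⊤ else ((linePoly f p q).rootMultiplicity 0 : ℕ∞)

/-- The `j`-th directional Taylor coefficient `f_j(p, y)` of `f`, specialized at
`x = p`, as a polynomial in the variables `y`; it is characterized by
`f(p + t y) = Σ_j f_j(p,y) t^j / j!`. -/
noncomputable def sliceCoeff {K : Type} [CommRing K] {n : ℕ}
    (f : MvPolynomial (Fin (n + 1)) K) (p : Fin (n + 1) → K) (j : ℕ) :
    MvPolynomial (Fin (n + 1)) K :=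
  (j.factorial : MvPolynomial (Fin (n + 1)) K) *
    (Polynomial.coeff
      (MvPolynomial.aeval
        (fun i => Polynomial.C (MvPolynomial.C (p i)) +
          Polynomial.X * Polynomial.C (MvPolynomial.X i)) f) j)

section Aux

variable {K : Type} [Field K] {n : ℕ}

lemma eval_smul_of_isHomogeneous {d : ℕ} {f : MvPolynomial (Fin (n + 1)) K}
    (hf : f.IsHomogeneous d) (c : K) (x : Fin (n + 1) → K) :
    MvPolynomial.eval (fun i => c * x i) f = c ^ d * MvPolynomial.eval x f := by
  rw [MvPolynomial.eval_eq, MvPolynomial.eval_eq, Finset.mul_sum]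
  refine Finset.sum_congr rfl fun m hm => ?_
  have hdeg : (∑ i ∈ m.support, m i) = d := by
    have h1 : m.degree = d := by
      rw [Finsupp.degree_eq_weight_one]
      exact hf (MvPolynomial.mem_support_iff.mp hm)
    exact h1
  simp_rw [mul_pow, Finset.prod_mul_distrib, Finset.prod_pow_eq_pow_sum, hdeg]
  ring

lemma linePoly_eval (f : MvPolynomial (Fin (n + 1)) K) (p q : Fin (n + 1) → K) (t : K) :
    (linePoly f p q).eval t = MvPolynomial.eval (fun i => p i + t * q i) f := by
  have h := MvPolynomial.eval₂_comp_left (Polynomial.evalRingHom t)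
    (algebraMap K (Polynomial K))
    (fun i => Polynomial.C (p i) + Polynomial.X * Polynomial.C (q i)) f
  simp only [coe_evalRingHom, Function.comp_def, Polynomial.eval_add, Polynomial.eval_mul,
    Polynomial.eval_C, Polynomial.eval_X] at h
  rw [linePoly, MvPolynomial.aeval_def, h]
  rw [show (Polynomial.evalRingHom t).comp (algebraMap K (Polynomial K)) = RingHom.id K by
    ext a; simp]
  rfl

lemma map_slice (f : MvPolynomial (Fin (n + 1)) K) (p q : Fin (n + 1) → K) :
    Polynomial.map (MvPolynomial.eval q)
      (MvPolynomial.aeval (fun i => Polynomial.C (MvPolynomial.C (p i)) +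
        Polynomial.X * Polynomial.C (MvPolynomial.X i)) f) = linePoly f p q := by
  have h := MvPolynomial.eval₂_comp_left
    (Polynomial.mapRingHom (MvPolynomial.eval q (R := K) (σ := Fin (n + 1))))
    (algebraMap K (Polynomial (MvPolynomial (Fin (n + 1)) K)))
    (fun i => Polynomial.C (MvPolynomial.C (p i)) +
      Polynomial.X * Polynomial.C (MvPolynomial.X i)) f
  simp only [coe_mapRingHom, Function.comp_def, Polynomial.map_add, Polynomial.map_mul,
    Polynomial.map_C, Polynomial.map_X, MvPolynomial.eval_C, MvPolynomial.eval_X] at h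
  rw [MvPolynomial.aeval_def, h, linePoly, MvPolynomial.aeval_def]
  congr 1
  ext a
  simp

lemma coeff_linePoly (f : MvPolynomial (Fin (n + 1)) K) (p q : Fin (n + 1) → K) (j : ℕ) :
    (linePoly f p q).coeff j = MvPolynomial.eval q
      ((MvPolynomial.aeval (fun i => Polynomial.C (MvPolynomial.C (p i)) +
        Polynomial.X * Polynomial.C (MvPolynomial.X i)) f).coeff j) := by
  rw [← map_slice f p q, Polynomial.coeff_map]

lemma slice_homog (f : MvPolynomial (Fin (n + 1)) K) (p : Fin (n + 1) → K) :
    ∀ j : ℕ, ((MvPolynomial.aeval (fun i => Polynomial.C (MvPolynomial.C (p i)) +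
      Polynomial.X * Polynomial.C (MvPolynomial.X i)) f).coeff j).IsHomogeneous j := by
  induction f using MvPolynomial.induction_on with
  | C a =>
      intro j
      simp only [MvPolynomial.aeval_C]
      rcases j with _ | j
      · simpa [Polynomial.algebraMap_apply, Polynomial.coeff_C] using
          MvPolynomial.isHomogeneous_C _ a
      · simp [Polynomial.algebraMap_apply, Polynomial.coeff_C]
        exact MvPolynomial.isHomogeneous_zero _ _ _
  | add f g ihf ihg =>
      intro j
      simp only [map_add, Polynomial.coeff_add]
      exact (ihf j).add (ihg j)
  | mul_X f i ih =>
      intro j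
      simp only [map_mul, MvPolynomial.aeval_X]
      rw [mul_add, Polynomial.coeff_add, Polynomial.coeff_mul_C, ← mul_assoc,
        Polynomial.coeff_mul_C]
      rcases j with _ | j
      · rw [show ((MvPolynomial.aeval (fun i => Polynomial.C (MvPolynomial.C (p i)) +
          Polynomial.X * Polynomial.C (MvPolynomial.X i)) f) * Polynomial.X).coeff 0 = 0 by
            simp [Polynomial.coeff_mul_X_pow']]
        simpa using (ih 0).mul (MvPolynomial.isHomogeneous_C _ (p i))
      · rw [Polynomial.coeff_mul_X]
        exact ((ih (j + 1)).mul (MvPolynomial.isHomogeneous_C _ _)).add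
          ((ih j).mul (MvPolynomial.isHomogeneous_X _ _))

lemma natDegree_linePoly_le (f : MvPolynomial (Fin (n + 1)) K) (p q : Fin (n + 1) → K) :
    (linePoly f p q).natDegree ≤ f.totalDegree := by
  rw [linePoly, MvPolynomial.aeval_def, MvPolynomial.eval₂_eq]
  refine Polynomial.natDegree_sum_le_of_forall_le _ _ fun m hm => ?_
  refine le_trans (Polynomial.natDegree_mul_le) (le_trans ?_ (MvPolynomial.le_totalDegree hm))
  have h1 : (algebraMap K (Polynomial K) (f.coeff m)).natDegree = 0 := by
    simp [Polynomial.algebraMap_apply]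
  rw [h1, zero_add]
  refine le_trans (Polynomial.natDegree_prod_le _ _) ?_
  have hterm : ∀ i ∈ m.support,
      ((Polynomial.C (p i) + Polynomial.X * Polynomial.C (q i)) ^ m i).natDegree ≤ m i := by
    intro i _
    refine le_trans Polynomial.natDegree_pow_le ?_
    have h2 : (Polynomial.C (p i) + Polynomial.X * Polynomial.C (q i)).natDegree ≤ 1 := by
      refine le_trans (Polynomial.natDegree_add_le _ _) ?_
      simp [Polynomial.natDegree_C]
      exact le_trans (Polynomial.natDegree_mul_le) (by simp)
    calc m i * (Polynomial.C (p i) + Polynomial.X * Polynomial.C (q i)).natDegree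
        ≤ m i * 1 := Nat.mul_le_mul_left _ h2
      _ = m i := mul_one _
  refine le_trans (Finset.sum_le_sum hterm) ?_
  rw [Finsupp.sum]

variable [CharZero K]

lemma linePoly_shift {d : ℕ} {f : MvPolynomial (Fin (n + 1)) K} (hf : f.IsHomogeneous d)
    (p q : Fin (n + 1) → K) (c : K) :
    linePoly f p (fun i => q i + c * p i) = ∑ j ∈ Finset.range (d + 1),
      Polynomial.C ((linePoly f p q).coeff j) *
        ((1 + Polynomial.C c * Polynomial.X) ^ (d - j) * Polynomial.X ^ j) := by
  have hdeg : (linePoly f p q).natDegree < d + 1 :=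
    Nat.lt_succ_of_le ((natDegree_linePoly_le f p q).trans hf.totalDegree_le)
  rw [← sub_eq_zero]
  have key : ∀ t : K, 1 + c * t ≠ 0 →
      ((linePoly f p fun i => q i + c * p i) -
        ∑ j ∈ Finset.range (d + 1),
          Polynomial.C ((linePoly f p q).coeff j) *
            ((1 + Polynomial.C c * Polynomial.X) ^ (d - j) * Polynomial.X ^ j)).IsRoot t := by
    intro t ht
    have hs : (t / (1 + c * t)) * (1 + c * t) = t := div_mul_cancel₀ _ ht
    show Polynomial.eval t _ = 0
    rw [Polynomial.eval_sub, sub_eq_zero, linePoly_eval]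
    have hpt : (fun i => p i + t * (q i + c * p i)) =
        fun i => (1 + c * t) * (p i + (t / (1 + c * t)) * q i) := by
      funext i
      linear_combination (-(q i)) * hs
    rw [hpt, eval_smul_of_isHomogeneous hf, ← linePoly_eval,
      Polynomial.eval_eq_sum_range' hdeg, Finset.mul_sum, Polynomial.eval_finset_sum]
    refine Finset.sum_congr rfl fun j hj => ?_
    have hjd : j ≤ d := Nat.lt_succ_iff.mp (Finset.mem_range.mp hj)
    simp only [Polynomial.eval_mul, Polynomial.eval_C, Polynomial.eval_pow,
      Polynomial.eval_add, Polynomial.eval_one, Polynomial.eval_X]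
    rw [show (1 + c * t) ^ d = (1 + c * t) ^ (d - j) * (1 + c * t) ^ j by
      rw [← pow_add, Nat.sub_add_cancel hjd]]
    rw [show t ^ j = (t / (1 + c * t)) ^ j * (1 + c * t) ^ j by
      rw [← mul_pow, hs]]
    ring
  have hfin : ({t : K | 1 + c * t = 0}).Finite := by
    apply Set.Subsingleton.finite
    intro a ha b hb
    simp only [Set.mem_setOf_eq] at ha hb
    have hc : c ≠ 0 := by rintro rfl; simp at ha
    have h3 : c * a = c * b := by
      have ha' : c * a = -1 := by linear_combination ha
      have hb' : c * b = -1 := by linear_combination hb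
      rw [ha', hb']
    exact mul_left_cancel₀ hc h3
  have hinf : ({t : K | 1 + c * t ≠ 0}).Infinite := by
    simpa [Set.compl_setOf] using hfin.infinite_compl
  exact Polynomial.eq_zero_of_infinite_isRoot _ (hinf.mono (fun t ht => key t ht))

lemma contact_iff (f : MvPolynomial (Fin (n + 1)) K) (p q : Fin (n + 1) → K) :
    ((n + 1 : ℕ) : ℕ∞) ≤ contactOrder f p q ↔
      ∀ m ≤ n, (linePoly f p q).coeff m = 0 := by
  rw [contactOrder]
  split_ifs with h
  · simp [h, le_top]
  · rw [Nat.cast_le, Polynomial.le_rootMultiplicity_iff h, Polynomial.C_0, sub_zero,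
      Polynomial.X_pow_dvd_iff]
    constructor <;> intro H m hm
    · exact H m (Nat.lt_succ_of_le hm)
    · exact H m (Nat.lt_succ_iff.mp hm)

lemma eval_sliceCoeff_eq_zero_iff (f : MvPolynomial (Fin (n + 1)) K)
    (p z : Fin (n + 1) → K) (m : ℕ) :
    MvPolynomial.eval z (sliceCoeff f p m) = 0 ↔ (linePoly f p z).coeff m = 0 := by
  rw [sliceCoeff, map_mul, coeff_linePoly, map_natCast]
  constructor
  · intro h
    rcases mul_eq_zero.mp h with h | h
    · exact absurd h (Nat.cast_ne_zero.mpr m.factorial_ne_zero)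
    · exact h
  · intro h
    rw [h, mul_zero]

end Aux

theorem resultant_vanishes_iff_flex
    (K : Type) [Field K] [IsAlgClosed K] [CharZero K] (n d e : ℕ) (hn : 1 ≤ n)
    (he : 1 ≤ e)
    -- the abstract multivariate resultant for degrees (1, 2, …, n, e):
    (Res : (Fin (n + 1) → MvPolynomial (Fin (n + 1)) K) → K)
    (hRes : ∀ sys : Fin (n + 1) → MvPolynomial (Fin (n + 1)) K,
      (∀ i, (sys i).IsHomogeneous
        (Fin.lastCases e (fun j : Fin n => (j : ℕ) + 1) i)) →
      (Res sys = 0 ↔ ∃ z : Fin (n + 1) → K, z ≠ 0 ∧ ∀ i, MvPolynomial.eval z (sys i) = 0))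
    (f : MvPolynomial (Fin (n + 1)) K) (hf : f.IsHomogeneous d) (hsf : Squarefree f)
    (g : MvPolynomial (Fin (n + 1)) K) (hg : g.IsHomogeneous e)
    (p : Fin (n + 1) → K) (hp : p ≠ 0) (hpV : MvPolynomial.eval p f = 0)
    (hgp : MvPolynomial.eval p g ≠ 0) :
    Res (Fin.lastCases g (fun j : Fin n => sliceCoeff f p ((j : ℕ) + 1))) = 0 ↔
      ∃ q : Fin (n + 1) → K, q ≠ 0 ∧ (¬∃ c : K, q = c • p) ∧
        ((n + 1 : ℕ) : ℕ∞) ≤ contactOrder f p q := by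
  have hsys : ∀ i, ((Fin.lastCases g
      (fun j : Fin n => sliceCoeff f p ((j : ℕ) + 1)) i : MvPolynomial (Fin (n + 1)) K)).IsHomogeneous
      (Fin.lastCases e (fun j : Fin n => (j : ℕ) + 1) i) := by
    intro i
    refine Fin.lastCases ?_ ?_ i
    · simpa using hg
    · intro j
      simp only [Fin.lastCases_castSucc]
      rw [sliceCoeff, ← map_natCast (MvPolynomial.C (σ := Fin (n + 1)) (R := K))]
      exact (slice_homog f p ((j : ℕ) + 1)).C_mul _
  rw [hRes _ hsys]
  constructor
  · rintro ⟨z, hz0, hz⟩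
    have hzg : MvPolynomial.eval z g = 0 := by
      have := hz (Fin.last n); simpa using this
    have hzs : ∀ j : Fin n, MvPolynomial.eval z (sliceCoeff f p ((j : ℕ) + 1)) = 0 := by
      intro j
      have := hz (Fin.castSucc j); simpa using this
    refine ⟨z, hz0, ?_, ?_⟩
    · rintro ⟨c, rfl⟩
      have hc0 : c ≠ 0 := by
        rintro rfl
        exact hz0 (zero_smul _ _)
      have h1 : MvPolynomial.eval (fun i => c * p i) g = 0 := hzg
      rw [eval_smul_of_isHomogeneous hg] at h1
      rcases mul_eq_zero.mp h1 with h | h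
      · exact hc0 (pow_eq_zero_iff (by omega) |>.mp h)
      · exact hgp h
    · rw [contact_iff]
      intro m hm
      match m with
      | 0 =>
          rw [Polynomial.coeff_zero_eq_eval_zero, linePoly_eval]
          simpa using hpV
      | Nat.succ m =>
          have hmn : m < n := by omega
          have h2 := hzs ⟨m, hmn⟩
          rw [eval_sliceCoeff_eq_zero_iff] at h2
          simpa using h2
  · rintro ⟨q, hq0, hqp, hqc⟩
    rw [contact_iff] at hqc
    have hGdeg : (linePoly g q p).degree ≠ 0 := by
      intro hdeg0
      have hGC : linePoly g q p = Polynomial.C ((linePoly g q p).coeff 0) :=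
        Polynomial.eq_C_of_degree_le_zero (le_of_eq hdeg0)
      have hBX : linePoly g p q = Polynomial.C ((linePoly g q p).coeff 0) * Polynomial.X ^ e := by
        rw [← sub_eq_zero]
        have key : ∀ s : K, s ≠ 0 →
            (linePoly g p q - Polynomial.C ((linePoly g q p).coeff 0) * Polynomial.X ^ e).IsRoot s := by
          intro s hs
          show Polynomial.eval s _ = 0
          rw [Polynomial.eval_sub, sub_eq_zero, linePoly_eval]
          have h2 : (linePoly g q p).eval s⁻¹ = (linePoly g q p).coeff 0 := by
            conv_lhs => rw [hGC]
            simp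
          rw [linePoly_eval] at h2
          rw [show (fun i => q i + s⁻¹ * p i) = fun i => s⁻¹ * (p i + s * q i) by
            funext i; field_simp; ring] at h2
          rw [eval_smul_of_isHomogeneous hg] at h2
          field_simp at h2
          simp only [Polynomial.eval_mul, Polynomial.eval_C, Polynomial.eval_pow,
            Polynomial.eval_X]
          have hs1 : s ^ e * (1 / s) ^ e = 1 := by
            rw [← mul_pow, mul_one_div_cancel hs, one_pow]
          linear_combination s ^ e * h2 - (MvPolynomial.eval (fun i => p i + s * q i) g) * hs1
        have hinf : ({s : K | s ≠ 0}).Infinite := by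
          exact (Set.finite_singleton (0 : K)).infinite_compl
        exact Polynomial.eq_zero_of_infinite_isRoot _ (hinf.mono (fun s hs => key s hs))
      have h0 : (linePoly g p q).eval 0 = MvPolynomial.eval p g := by
        rw [linePoly_eval]
        simp
      rw [hBX] at h0
      simp [zero_pow (by omega : e ≠ 0)] at h0
      exact hgp h0.symm
    obtain ⟨c, hc⟩ := IsAlgClosed.exists_root _ hGdeg
    have hcg : MvPolynomial.eval (fun i => q i + c * p i) g = 0 := by
      rw [← linePoly_eval]; exact hc
    refine ⟨fun i => q i + c * p i, ?_, ?_⟩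
    · intro h0
      refine hqp ⟨-c, funext fun i => ?_⟩
      have := congrFun h0 i
      simp only [Pi.zero_apply] at this
      simp only [Pi.smul_apply, smul_eq_mul]
      linear_combination this
    · intro i
      refine Fin.lastCases ?_ ?_ i
      · simpa using hcg
      · intro j
        simp only [Fin.lastCases_castSucc]
        rw [eval_sliceCoeff_eq_zero_iff, linePoly_shift hf p q c,
          Polynomial.finset_sum_coeff]
        apply Finset.sum_eq_zero
        intro k hk
        by_cases hkn : k ≤ n
        · rw [hqc k hkn]
          simp
        · rw [← mul_assoc, Polynomial.coeff_mul_X_pow', if_neg (by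
            have : (j : ℕ) < n := j.isLt
            omega)]
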